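/- For every continuously differentiable function v : ℝ → ℝ with v(t) → −1 as t → −∞ and v(t) → +1 as t → +∞, one has ∫_ℝ [(v(t)² − 1)² + v'(t)²] dt ≥ 8/3 (the integral of the nonnegative integrand, possibly equal to +∞). -/

import Mathlib

open MeasureTheory Filter intervalIntegral

noncomputable def GG : ℝ → ℝ := fun u => ∫ s in (0:ℝ)..u, 2 * |1 - s ^ 2|

lemma GGcont : Continuous fun s : ℝ => 2 * |1 - s ^ 2| := by fun_prop

lemma GGderiv (u : ℝ) : HasDerivAt GG (2 * |1 - u ^ 2|) u := by
  exact integral_hasDerivAt_right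
    (GGcont.intervalIntegrable _ _)
    (GGcont.stronglyMeasurableAtFilter _ _)
    GGcont.continuousAt

lemma GGval : GG 1 - GG (-1) = 8 / 3 := by
  have hadd : (∫ s in (-1:ℝ)..0, 2 * |1 - s ^ 2|) + ∫ s in (0:ℝ)..1, 2 * |1 - s ^ 2|
      = ∫ s in (-1:ℝ)..1, 2 * |1 - s ^ 2| :=
    integral_add_adjacent_intervals
      (GGcont.intervalIntegrable _ _) (GGcont.intervalIntegrable _ _)
  have hsym : (∫ s in (0:ℝ)..(-1), 2 * |1 - s ^ 2|) = -∫ s in (-1:ℝ)..0, 2 * |1 - s ^ 2| :=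
    integral_symm (-1) 0
  have h1 : GG 1 - GG (-1) = ∫ s in (-1:ℝ)..1, 2 * |1 - s ^ 2| := by
    unfold GG
    rw [hsym]
    linarith [hadd]
  rw [h1]
  have h2 : (∫ s in (-1:ℝ)..1, 2 * |1 - s ^ 2|) = ∫ s in (-1:ℝ)..1, 2 * (1 - s ^ 2) := by
    apply integral_congr
    intro s hs
    rw [Set.uIcc_of_le (by norm_num)] at hs
    have h1 : -1 ≤ s := hs.1
    have h2 : s ≤ 1 := hs.2
    have h0 : 0 ≤ 1 - s ^ 2 := by nlinarith
    show 2 * |1 - s ^ 2| = 2 * (1 - s ^ 2)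
    rw [abs_of_nonneg h0]
  rw [h2]
  have h3 : (∫ s in (-1:ℝ)..1, 2 * (1 - s ^ 2))
      = 2 * ((∫ s in (-1:ℝ)..1, (1:ℝ)) - ∫ s in (-1:ℝ)..1, s ^ 2) := by
    rw [← integral_sub intervalIntegrable_const (intervalIntegrable_pow 2),
      ← intervalIntegral.integral_const_mul]
  rw [h3, integral_pow]
  simp
  norm_num

/-- scalar Modica–Mortola lower bound: every `C¹` function `v : ℝ → ℝ`
connecting `−1` (at `−∞`) to `+1` (at `+∞`) satisfies
`∫ (v² − 1)² + (v')² ≥ 8/3`. -/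
theorem stmt2 (v : ℝ → ℝ) (hv : ContDiff ℝ 1 v)
    (hbot : Tendsto v atBot (nhds (-1))) (htop : Tendsto v atTop (nhds 1)) :
    ENNReal.ofReal (8 / 3)
      ≤ ∫⁻ t : ℝ, ENNReal.ofReal ((v t ^ 2 - 1) ^ 2 + deriv v t ^ 2) := by
  set h : ℝ → ℝ := fun t => (v t ^ 2 - 1) ^ 2 + deriv v t ^ 2 with hh
  have hvcont : Continuous v := hv.continuous
  have hv'cont : Continuous (deriv v) := hv.continuous_deriv le_rfl
  have hcont : Continuous h := by fun_prop
  have hnn : ∀ t, 0 ≤ h t := fun t => by positivity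
  set g : ℝ → ℝ := fun t => GG (v t) with hg
  have hgderiv : ∀ t, HasDerivAt g (2 * |1 - v t ^ 2| * deriv v t) t := fun t =>
    (GGderiv (v t)).comp t ((hv.differentiable one_ne_zero t).hasDerivAt)
  have hg'cont : Continuous fun t => 2 * |1 - v t ^ 2| * deriv v t := by fun_prop
  have hle : ∀ t, 2 * |1 - v t ^ 2| * deriv v t ≤ h t := by
    intro t
    have hA := abs_nonneg (1 - v t ^ 2)
    have hb := le_abs_self (deriv v t)
    have hmul : |1 - v t ^ 2| * deriv v t ≤ |1 - v t ^ 2| * |deriv v t| :=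
      mul_le_mul_of_nonneg_left hb hA
    have h6 : (v t ^ 2 - 1) ^ 2 = |1 - v t ^ 2| ^ 2 := by rw [sq_abs]; ring
    have h5 := sq_abs (deriv v t)
    show 2 * |1 - v t ^ 2| * deriv v t ≤ (v t ^ 2 - 1) ^ 2 + deriv v t ^ 2
    nlinarith [sq_nonneg (|1 - v t ^ 2| - |deriv v t|)]
  -- key: for every a ≤ b, ofReal (g b - g a) ≤ lintegral
  have key : ∀ a b : ℝ, a ≤ b →
      ENNReal.ofReal (g b - g a) ≤ ∫⁻ t : ℝ, ENNReal.ofReal (h t) := by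
    intro a b hab
    have hftc : (∫ t in a..b, 2 * |1 - v t ^ 2| * deriv v t) = g b - g a :=
      integral_eq_sub_of_hasDerivAt (fun t _ => hgderiv t)
        (hg'cont.intervalIntegrable _ _)
    have hmono : (∫ t in a..b, 2 * |1 - v t ^ 2| * deriv v t) ≤ ∫ t in a..b, h t :=
      integral_mono_on hab (hg'cont.intervalIntegrable _ _)
        (hcont.intervalIntegrable _ _) (fun t _ => hle t)
    have h1 : g b - g a ≤ ∫ t in Set.Ioc a b, h t := by
      rw [← integral_of_le hab, ← hftc]; exact hmono
    calc ENNReal.ofReal (g b - g a)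
        ≤ ENNReal.ofReal (∫ t in Set.Ioc a b, h t) := ENNReal.ofReal_le_ofReal h1
      _ = ∫⁻ t in Set.Ioc a b, ENNReal.ofReal (h t) := by
          rw [MeasureTheory.ofReal_integral_eq_lintegral_ofReal
            (hcont.integrableOn_Ioc) (Filter.Eventually.of_forall fun t => hnn t)]
      _ ≤ ∫⁻ t : ℝ, ENNReal.ofReal (h t) := setLIntegral_le_lintegral _ _
  -- limit
  have hGc : Continuous GG := by
    rw [continuous_iff_continuousAt]
    intro u
    exact (GGderiv u).differentiableAt.continuousAt
  have h1 : Tendsto (fun n : ℕ => g n) atTop (nhds (GG 1)) :=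
    (hGc.tendsto 1).comp (htop.comp tendsto_natCast_atTop_atTop)
  have h2 : Tendsto (fun n : ℕ => g (-(n:ℝ))) atTop (nhds (GG (-1))) :=
    (hGc.tendsto (-1)).comp (hbot.comp (tendsto_neg_atTop_atBot.comp tendsto_natCast_atTop_atTop))
  have htend : Tendsto (fun n : ℕ => g (n:ℝ) - g (-(n:ℝ))) atTop (nhds (8/3)) := by
    have := h1.sub h2
    rwa [GGval] at this
  have htend2 := (ENNReal.continuous_ofReal.tendsto _).comp htend
  exact le_of_tendsto htend2 (Filter.Eventually.of_forall fun n =>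
    key (-(n:ℝ)) (n:ℝ) (by have := Nat.cast_nonneg (α := ℝ) n; linarith))
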